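/- Let F be a universal₂ family of hash functions from a finite set X to a finite set S, and let X be a random variable on X with Rényi entropy of order 2 equal to H₂(X) (i.e., ∑_x P_X(x)² = 2^{-H₂(X)}). If f is chosen uniformly at random from F, independently of X, then the collision probability of S = f(X) satisfies P_C(S) ≤ 2^{-H₂(X)} + 1/|S|. -/

import Mathlib

open Finset

/-- If `F` is a universal₂ family of hash functions from `X` to `S`, `X` is distributed
according to `p` with Rényi-2 entropy `H₂` (i.e. `∑ p x ² = 2^{-H₂}`), and `f` is drawn
uniformly from `F` independently of `X`, then the collision probability of `S = f(X)`
is at most `2^{-H₂} + 1/|S|`. -/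
theorem universal_hash_collision_bound
    (X S : Type*) [Fintype X] [Fintype S] [Nonempty S] [DecidableEq S]
    (F : Finset (X → S)) (hF : F.Nonempty)
    (huniv : ∀ x₁ x₂ : X, x₁ ≠ x₂ →
      ((F.filter (fun f => f x₁ = f x₂)).card : ℝ) / F.card ≤ 1 / (Fintype.card S : ℝ))
    (p : X → ℝ) (hp0 : ∀ x, 0 ≤ p x) (hp1 : ∑ x, p x = 1)
    (H₂ : ℝ) (hH₂ : ∑ x, (p x) ^ 2 = (2 : ℝ) ^ (-H₂)) :
    ∑ s : S, ((1 / (F.card : ℝ)) * ∑ f ∈ F, ∑ x ∈ univ.filter (fun x => f x = s), p x) ^ 2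
      ≤ (2 : ℝ) ^ (-H₂) + 1 / (Fintype.card S : ℝ) := by
  classical
  have hn : (0 : ℝ) < F.card := by exact_mod_cast Finset.card_pos.mpr hF
  -- Step A : Cauchy-Schwarz
  have stepA : ∑ s : S, ((1 / (F.card : ℝ)) * ∑ f ∈ F, ∑ x ∈ univ.filter (fun x => f x = s), p x) ^ 2
      ≤ (1 / (F.card : ℝ)) * ∑ f ∈ F, ∑ s : S, (∑ x ∈ univ.filter (fun x => f x = s), p x) ^ 2 := by
    calc ∑ s : S, ((1 / (F.card : ℝ)) * ∑ f ∈ F, ∑ x ∈ univ.filter (fun x => f x = s), p x) ^ 2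
        ≤ ∑ s : S, (1 / (F.card : ℝ)) * ∑ f ∈ F, (∑ x ∈ univ.filter (fun x => f x = s), p x) ^ 2 := by
          refine sum_le_sum fun s _ => ?_
          rw [mul_pow]
          have h := sq_sum_le_card_mul_sum_sq (s := F)
            (f := fun f => ∑ x ∈ univ.filter (fun x => f x = s), p x)
          calc (1 / (F.card : ℝ))^2 * (∑ f ∈ F, ∑ x ∈ univ.filter (fun x => f x = s), p x) ^ 2
              ≤ (1 / (F.card : ℝ))^2 * ((F.card : ℝ) * ∑ f ∈ F, (∑ x ∈ univ.filter (fun x => f x = s), p x) ^ 2) :=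
                mul_le_mul_of_nonneg_left h (by positivity)
            _ = (1 / (F.card : ℝ)) * ∑ f ∈ F, (∑ x ∈ univ.filter (fun x => f x = s), p x) ^ 2 := by
                field_simp
      _ = (1 / (F.card : ℝ)) * ∑ f ∈ F, ∑ s : S, (∑ x ∈ univ.filter (fun x => f x = s), p x) ^ 2 := by
          rw [← mul_sum, sum_comm]
  -- Step B : expand the square
  have stepB : ∀ f : X → S, ∑ s : S, (∑ x ∈ univ.filter (fun x => f x = s), p x) ^ 2
      = ∑ x : X, (p x ^ 2 + ∑ x' ∈ (univ.erase x), if f x' = f x then p x * p x' else 0) := by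
    intro f
    have h1 : ∑ s : S, (∑ x ∈ univ.filter (fun x => f x = s), p x) ^ 2
        = ∑ x : X, p x * ∑ x' ∈ univ.filter (fun x' => f x' = f x), p x' := by
      have h2 : ∀ s : S, (∑ x ∈ univ.filter (fun x => f x = s), p x) ^ 2
          = ∑ x ∈ univ.filter (fun x => f x = s),
              (p x * ∑ x' ∈ univ.filter (fun x' => f x' = f x), p x') := by
        intro s
        rw [sq, sum_mul]
        refine sum_congr rfl fun x hx => ?_
        rw [(mem_filter.mp hx).2]
      rw [sum_congr rfl fun s _ => h2 s]
      exact Finset.sum_fiberwise univ f _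
    rw [h1]
    refine sum_congr rfl fun x _ => ?_
    have hx : x ∈ univ.filter (fun x' => f x' = f x) := by simp
    rw [mul_sum, ← Finset.add_sum_erase _ _ hx, ← sq]
    congr 1
    rw [show (univ.filter (fun x' => f x' = f x)).erase x
        = (univ.erase x).filter (fun x' => f x' = f x) from by ext; simp [and_comm], sum_filter]
  -- rewrite the average
  have hrw : ∑ f ∈ F, ∑ s : S, (∑ x ∈ univ.filter (fun x => f x = s), p x) ^ 2
      = (F.card : ℝ) * (2:ℝ)^(-H₂)
        + ∑ x : X, ∑ x' ∈ univ.erase x,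
            (p x * p x') * ((F.filter (fun f => f x' = f x)).card : ℝ) := by
    rw [sum_congr rfl fun f _ => stepB f]
    have h3 : ∀ f : X → S, ∑ x : X, (p x ^ 2 + ∑ x' ∈ (univ.erase x), if f x' = f x then p x * p x' else 0)
        = (2:ℝ)^(-H₂) + ∑ x : X, ∑ x' ∈ (univ.erase x), if f x' = f x then p x * p x' else 0 := by
      intro f; rw [sum_add_distrib, hH₂]
    rw [sum_congr rfl fun f _ => h3 f, sum_add_distrib, sum_const, nsmul_eq_mul]
    congr 1
    rw [sum_comm]
    refine sum_congr rfl fun x _ => ?_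
    rw [sum_comm]
    refine sum_congr rfl fun x' _ => ?_
    rw [← sum_filter, sum_const, nsmul_eq_mul, mul_comm]
  -- final bound
  have hT : ∑ x : X, ∑ x' ∈ univ.erase x,
        (p x * p x') * ((F.filter (fun f => f x' = f x)).card : ℝ)
      ≤ (F.card : ℝ) * (1 / (Fintype.card S : ℝ)) := by
    calc ∑ x : X, ∑ x' ∈ univ.erase x,
          (p x * p x') * ((F.filter (fun f => f x' = f x)).card : ℝ)
        ≤ ∑ x : X, ∑ x' ∈ univ.erase x, (p x * p x') * ((F.card : ℝ) * (1 / (Fintype.card S : ℝ))) := by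
          refine sum_le_sum fun x _ => sum_le_sum fun x' hx' => ?_
          refine mul_le_mul_of_nonneg_left ?_ (mul_nonneg (hp0 _) (hp0 _))
          have h := huniv x' x (Finset.ne_of_mem_erase hx')
          rw [div_le_iff₀ hn] at h
          calc ((F.filter (fun f => f x' = f x)).card : ℝ) ≤ 1 / (Fintype.card S : ℝ) * F.card := h
            _ = (F.card : ℝ) * (1 / (Fintype.card S : ℝ)) := by ring
      _ = (∑ x : X, ∑ x' ∈ univ.erase x, p x * p x') * ((F.card : ℝ) * (1 / (Fintype.card S : ℝ))) := by
          rw [sum_mul]; exact sum_congr rfl fun x _ => (sum_mul _ _ _).symm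
      _ ≤ 1 * ((F.card : ℝ) * (1 / (Fintype.card S : ℝ))) := by
          refine mul_le_mul_of_nonneg_right ?_ (by positivity)
          calc ∑ x : X, ∑ x' ∈ univ.erase x, p x * p x'
              ≤ ∑ x : X, ∑ x' : X, p x * p x' :=
                sum_le_sum fun x _ => sum_le_sum_of_subset_of_nonneg (subset_univ _)
                  (fun i _ _ => mul_nonneg (hp0 _) (hp0 _))
            _ = (∑ x, p x) * (∑ x, p x) := by rw [Finset.sum_mul_sum]
            _ = 1 := by rw [hp1]; norm_num
      _ = (F.card : ℝ) * (1 / (Fintype.card S : ℝ)) := one_mul _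
  refine stepA.trans ?_
  rw [hrw, mul_add, ← mul_assoc, one_div_mul_cancel hn.ne', one_mul]
  have := mul_le_mul_of_nonneg_left hT (le_of_lt (by positivity : (0:ℝ) < 1 / (F.card:ℝ)))
  refine add_le_add_right ?_ _
  calc (1 / (F.card : ℝ)) * ∑ x : X, ∑ x' ∈ univ.erase x,
        (p x * p x') * ((F.filter (fun f => f x' = f x)).card : ℝ)
      ≤ (1 / (F.card : ℝ)) * ((F.card : ℝ) * (1 / (Fintype.card S : ℝ))) := this
    _ = 1 / (Fintype.card S : ℝ) := by field_simp
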